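/- For every successful attack O = (A, ≺) on a dynamic attack tree T there exists an exact time assignment f with f_R ≤ t(O, d), obtained by setting f_a = ∞ for a ∉ A, f_a = d_a + max_{a' ≺ a} f_{a'} for a ∈ A (max over empty set is 0), and propagating exactly through gates; in particular f_v < ∞ for every node v reached by O. -/

import Mathlib

open scoped ENNReal

/-- A dynamic attack tree: leaves are basic attack steps (BAS), internal
nodes are OR / AND / SAND gates with a list of children (ordered, which
matters for SAND).  DAG-sharing is modelled by shared BAS labels /
shared subterms. -/
inductive DAT (α : Type) : Type
  | bas (a : α) : DAT α
  | or (cs : List (DAT α)) : DAT α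
  | and (cs : List (DAT α)) : DAT α
  | sand (cs : List (DAT α)) : DAT α

namespace DAT

variable {α : Type}

/-- `IsBasDesc v a` : the BAS `a` is a descendant of node `v` (i.e. `a ∈ B_v`). -/
inductive IsBasDesc : DAT α → α → Prop
  | bas (a : α) : IsBasDesc (.bas a) a
  | or {cs : List (DAT α)} {c : DAT α} {a : α} : c ∈ cs → IsBasDesc c a → IsBasDesc (.or cs) a
  | and {cs : List (DAT α)} {c : DAT α} {a : α} : c ∈ cs → IsBasDesc c a → IsBasDesc (.and cs) a
  | sand {cs : List (DAT α)} {c : DAT α} {a : α} : c ∈ cs → IsBasDesc c a → IsBasDesc (.sand cs) a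

/-- `Subnode v T` : `v` is a node of the DAT `T` (a subterm). -/
inductive Subnode : DAT α → DAT α → Prop
  | refl (t : DAT α) : Subnode t t
  | or {v c : DAT α} {cs : List (DAT α)} : c ∈ cs → Subnode v c → Subnode v (.or cs)
  | and {v c : DAT α} {cs : List (DAT α)} : c ∈ cs → Subnode v c → Subnode v (.and cs)
  | sand {v c : DAT α} {cs : List (DAT α)} : c ∈ cs → Subnode v c → Subnode v (.sand cs)

/-- `Reaches A r v` : the attack given by the set `A` of activated BASes and
the strict order `r` on them reaches node `v`. -/
inductive Reaches (A : Set α) (r : α → α → Prop) : DAT α → Prop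
  | bas {a : α} : a ∈ A → Reaches A r (.bas a)
  | or {cs : List (DAT α)} {c : DAT α} : c ∈ cs → Reaches A r c → Reaches A r (.or cs)
  | and {cs : List (DAT α)} : (∀ c ∈ cs, Reaches A r c) → Reaches A r (.and cs)
  | sand {cs : List (DAT α)} :
      (∀ c ∈ cs, Reaches A r c) →
      (∀ i, (h : i + 1 < cs.length) → ∀ a a', a ∈ A → a' ∈ A →
        IsBasDesc (cs.get ⟨i, Nat.lt_of_succ_lt h⟩) a →
        IsBasDesc (cs.get ⟨i + 1, h⟩) a' → r a a') →
      Reaches A r (.sand cs)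

end DAT

/-- An attack: a finite set of BASes together with a strict partial order on it. -/
structure Attack (α : Type) where
  carrier : Finset α
  lt : α → α → Prop
  lt_mem : ∀ {a b : α}, lt a b → a ∈ carrier ∧ b ∈ carrier
  lt_irrefl : ∀ a, ¬ lt a a
  lt_trans : ∀ {a b c : α}, lt a b → lt b c → lt a c

namespace Attack

variable {α : Type}

/-- The order on attacks: inclusion of carriers and of order relations. -/
def le (O O' : Attack α) : Prop :=
  O.carrier ⊆ O'.carrier ∧ ∀ a b, O.lt a b → O'.lt a b

end Attack

namespace DAT

variable {α : Type}

/-- A maximal chain of the strict poset with carrier `A` and order `r`. -/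
def MaxChain (A : Set α) (r : α → α → Prop) (C : Finset α) : Prop :=
  ↑C ⊆ A ∧ IsChain r ↑C ∧
    ∀ C' : Finset α, ↑C' ⊆ A → IsChain r ↑C' → C ⊆ C' → C' = C

/-- Duration `t(O, d)` of an attack: the maximum over maximal chains of the
sum of the durations. -/
noncomputable def dur (A : Set α) (r : α → α → Prop) (d : α → ℝ≥0∞) : ℝ≥0∞ :=
  ⨆ C ∈ {C : Finset α | MaxChain A r C}, ∑ a ∈ C, d a

/-- An attack is successful on `T` if it reaches the root of `T`. -/
def Successful (O : Attack α) (T : DAT α) : Prop :=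
  Reaches (↑O.carrier) O.lt T

/-- Min time: the infimum of the durations of successful attacks (`∞` if there
are none). -/
noncomputable def mt (T : DAT α) (d : α → ℝ≥0∞) : ℝ≥0∞ :=
  ⨅ O ∈ {O : Attack α | Successful O T}, dur (↑O.carrier) O.lt d

end DAT

namespace DAT

variable {α : Type}

/-- The bottom-up algorithm MT-BU. -/
noncomputable def BU (d : α → ℝ≥0∞) : DAT α → ℝ≥0∞
  | .bas a => d a
  | .or cs => (cs.attach.map (fun c => BU d c.1)).foldr min ⊤
  | .and cs => (cs.attach.map (fun c => BU d c.1)).foldr max 0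
  | .sand cs => (cs.attach.map (fun c => BU d c.1)).sum
  decreasing_by all_goals (simp_wf; have := List.sizeOf_lt_of_mem c.2; omega)

/-- A static attack tree: no SAND gates. -/
inductive IsStatic : DAT α → Prop
  | bas (a : α) : IsStatic (.bas a)
  | or {cs : List (DAT α)} : (∀ c ∈ cs, IsStatic c) → IsStatic (.or cs)
  | and {cs : List (DAT α)} : (∀ c ∈ cs, IsStatic c) → IsStatic (.and cs)

/-- Reachability for a plain set of BASes (static semantics, no order needed). -/
inductive ReachSet (A : Set α) : DAT α → Prop
  | bas {a : α} : a ∈ A → ReachSet A (.bas a)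
  | or {cs : List (DAT α)} {c : DAT α} : c ∈ cs → ReachSet A c → ReachSet A (.or cs)
  | and {cs : List (DAT α)} : (∀ c ∈ cs, ReachSet A c) → ReachSet A (.and cs)

/-- List of the BAS labels occurring in a DAT, with multiplicity. -/
def basList : DAT α → List α
  | .bas a => [a]
  | .or cs => (cs.attach.map (fun c => basList c.1)).flatten
  | .and cs => (cs.attach.map (fun c => basList c.1)).flatten
  | .sand cs => (cs.attach.map (fun c => basList c.1)).flatten
  decreasing_by all_goals (simp_wf; have := List.sizeOf_lt_of_mem c.2; omega)

/-- The "bad" condition forcing a SAND node to `∞`: some child is not reached,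
or some pair of BASes of consecutive children violates the ordering constraint. -/
def SandBad (d : α → ℝ≥0∞) (f : DAT α → ℝ≥0∞) (cs : List (DAT α)) : Prop :=
  (∃ c ∈ cs, f c = ⊤) ∨
    ∃ i, ∃ h : i + 1 < cs.length, ∃ a a',
      IsBasDesc (cs.get ⟨i, Nat.lt_of_succ_lt h⟩) a ∧
      IsBasDesc (cs.get ⟨i + 1, h⟩) a' ∧
      f (.bas a') - d a' < f (.bas a) ∧ f (.bas a) < ⊤

/-- Local time-assignment constraints at a node. -/
def LocalTA (d : α → ℝ≥0∞) (f : DAT α → ℝ≥0∞) : DAT α → Prop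
  | .bas a => d a ≤ f (.bas a)
  | .or cs => (⨅ c ∈ cs, f c) ≤ f (.or cs)
  | .and cs => (⨆ c ∈ cs, f c) ≤ f (.and cs)
  | .sand cs =>
      (∀ c, cs.getLast? = some c → f c ≤ f (.sand cs)) ∧
      (SandBad d f cs → f (.sand cs) = ⊤)

/-- Local exact time-assignment constraints at a node. -/
def LocalExact (d : α → ℝ≥0∞) (f : DAT α → ℝ≥0∞) : DAT α → Prop
  | .bas a => d a ≤ f (.bas a)
  | .or cs => f (.or cs) = ⨅ c ∈ cs, f c
  | .and cs => f (.and cs) = ⨆ c ∈ cs, f c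
  | .sand cs =>
      (SandBad d f cs → f (.sand cs) = ⊤) ∧
      (¬ SandBad d f cs → ∀ c, cs.getLast? = some c → f (.sand cs) = f c)

/-- `f` is a time assignment for `T`. -/
def IsTA (d : α → ℝ≥0∞) (f : DAT α → ℝ≥0∞) (T : DAT α) : Prop :=
  ∀ v, Subnode v T → LocalTA d f v

/-- `f` is an exact time assignment for `T`. -/
def IsExactTA (d : α → ℝ≥0∞) (f : DAT α → ℝ≥0∞) (T : DAT α) : Prop :=
  ∀ v, Subnode v T → LocalExact d f v

end DAT


/- ===== Auxiliary definitions and lemmas for the proof ===== -/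

namespace Stmt13Aux

open DAT

variable {α : Type}

open Classical in
noncomputable def ordm (O : Attack α) (a : α) : ℕ :=
  (O.carrier.filter (fun x => O.lt x a)).card

lemma ordm_lt {O : Attack α} {a b : α} (h : O.lt b a) : ordm O b < ordm O a := by
  classical
  apply Finset.card_lt_card
  constructor
  · intro x hx
    simp only [Finset.mem_filter] at hx ⊢
    exact ⟨hx.1, O.lt_trans hx.2 h⟩
  · intro hsub
    have hb : b ∈ O.carrier.filter (fun x => O.lt x a) := by
      simp [Finset.mem_filter, (O.lt_mem h).1, h]
    have := hsub hb
    simp only [Finset.mem_filter] at this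
    exact O.lt_irrefl b this.2

open Classical in
noncomputable def fb (O : Attack α) (d : α → ℝ≥0∞) (a : α) : ℝ≥0∞ :=
  if a ∈ O.carrier then d a + ⨆ a', ⨆ _ : O.lt a' a, fb O d a' else ⊤
termination_by ordm O a
decreasing_by exact ordm_lt ‹_›

lemma fb_of_mem (O : Attack α) (d : α → ℝ≥0∞) {a : α} (h : a ∈ O.carrier) :
    fb O d a = d a + ⨆ a' ∈ {x | O.lt x a}, fb O d a' := by
  rw [fb]; simp [h]

lemma fb_of_not_mem (O : Attack α) (d : α → ℝ≥0∞) {a : α} (h : a ∉ O.carrier) :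
    fb O d a = ⊤ := by
  rw [fb]; simp [h]

lemma chain_sum_le_dur (O : Attack α) (d : α → ℝ≥0∞) {C : Finset α}
    (hC : C ⊆ O.carrier) (hch : IsChain O.lt ↑C) :
    ∑ a ∈ C, d a ≤ dur (↑O.carrier) O.lt d := by
  classical
  set F := O.carrier.powerset.filter (fun C' => C ⊆ C' ∧ IsChain O.lt ↑C') with hF
  have hCF : C ∈ F := by
    simp only [hF, Finset.mem_filter, Finset.mem_powerset]
    exact ⟨hC, subset_refl _, hch⟩
  obtain ⟨D, hDF, hmax⟩ := F.exists_max_image Finset.card ⟨C, hCF⟩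
  simp only [hF, Finset.mem_filter, Finset.mem_powerset] at hDF
  have hMC : MaxChain (↑O.carrier) O.lt D := by
    refine ⟨Finset.coe_subset.2 hDF.1, hDF.2.2, fun C'' h1 h2 hsub => ?_⟩
    refine (Finset.eq_of_subset_of_card_le hsub (hmax C'' ?_)).symm
    simp only [hF, Finset.mem_filter, Finset.mem_powerset]
    exact ⟨Finset.coe_subset.1 h1, hDF.2.1.trans hsub, h2⟩
  calc ∑ a ∈ C, d a ≤ ∑ a ∈ D, d a :=
        Finset.sum_le_sum_of_subset hDF.2.1
    _ ≤ dur (↑O.carrier) O.lt d :=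
        le_iSup₂ (f := fun (C : Finset α) (_ : MaxChain (↑O.carrier) O.lt C) => ∑ a ∈ C, d a) D hMC

lemma dur_lt_top (O : Attack α) (d : α → ℝ≥0∞) (hd : ∀ a, d a ≠ ⊤) :
    dur (↑O.carrier) O.lt d < ⊤ := by
  have h1 : dur (↑O.carrier) O.lt d ≤ ∑ a ∈ O.carrier, d a := by
    refine iSup₂_le fun C hC => Finset.sum_le_sum_of_subset (Finset.coe_subset.1 hC.1)
  exact h1.trans_lt (ENNReal.sum_lt_top.2 fun a _ => (hd a).lt_top)

lemma fb_chain (O : Attack α) (d : α → ℝ≥0∞) :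
    ∀ n a, ordm O a < n → a ∈ O.carrier →
      ∃ C : Finset α, C ⊆ O.carrier ∧ IsChain O.lt ↑C ∧
        (∀ x ∈ C, x = a ∨ O.lt x a) ∧ fb O d a ≤ ∑ x ∈ C, d x := by
  classical
  intro n
  induction n with
  | zero => intro a h; omega
  | succ n ih =>
    intro a hn ha
    rw [fb_of_mem O d ha]
    by_cases hP : ∃ b, O.lt b a
    · set P := O.carrier.filter (fun x => O.lt x a) with hPdef
      have hPne : P.Nonempty := by
        obtain ⟨b, hb⟩ := hP
        exact ⟨b, by simp [hPdef, (O.lt_mem hb).1, hb]⟩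
      obtain ⟨b, hbP, hbmax⟩ := P.exists_max_image (fb O d) hPne
      simp only [hPdef, Finset.mem_filter] at hbP
      have hS : (⨆ a' ∈ {x | O.lt x a}, fb O d a') ≤ fb O d b := by
        refine iSup₂_le fun x hx => hbmax x ?_
        have hx' : O.lt x a := hx
        simp [hPdef, (O.lt_mem hx').1, hx']
      have hb_lt : ordm O b < n := by
        have := ordm_lt hbP.2; omega
      obtain ⟨C₀, hC₀sub, hC₀ch, hC₀lt, hC₀sum⟩ := ih b hb_lt hbP.1
      have hlt : ∀ x ∈ C₀, O.lt x a := by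
        intro x hx
        rcases hC₀lt x hx with rfl | h
        · exact hbP.2
        · exact O.lt_trans h hbP.2
      have haC₀ : a ∉ C₀ := fun h => O.lt_irrefl a (hlt a h)
      refine ⟨insert a C₀, Finset.insert_subset ha hC₀sub, ?_, ?_, ?_⟩
      · rw [Finset.coe_insert]
        exact hC₀ch.insert fun x hx _ => Or.inr (hlt x hx)
      · intro x hx
        rcases Finset.mem_insert.1 hx with rfl | h
        · exact Or.inl rfl
        · exact Or.inr (hlt x h)
      · rw [Finset.sum_insert haC₀]
        exact add_le_add le_rfl (hS.trans hC₀sum)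
    · have hS : (⨆ a' ∈ {x | O.lt x a}, fb O d a') = 0 := by
        refine le_antisymm (iSup₂_le fun x hx => absurd ⟨x, hx⟩ hP) (zero_le)
      refine ⟨{a}, Finset.singleton_subset_iff.2 ha, ?_, ?_, ?_⟩
      · simp [IsChain]
      · intro x hx; simp only [Finset.mem_singleton] at hx; exact Or.inl hx
      · rw [hS, Finset.sum_singleton, add_zero]

lemma fb_le_dur (O : Attack α) (d : α → ℝ≥0∞) {a : α} (ha : a ∈ O.carrier) :
    fb O d a ≤ dur (↑O.carrier) O.lt d := by
  obtain ⟨C, h1, h2, _, h4⟩ := fb_chain O d (ordm O a + 1) a (by omega) ha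
  exact h4.trans (chain_sum_le_dur O d h1 h2)

lemma fb_lt_top (O : Attack α) (d : α → ℝ≥0∞) (hd : ∀ a, d a ≠ ⊤) {a : α}
    (ha : a ∈ O.carrier) : fb O d a < ⊤ :=
  (fb_le_dur O d ha).trans_lt (dur_lt_top O d hd)

/-- The "bad pairs" part of `SandBad`, formulated for a BAS-level assignment. -/
def BadPairs (d : α → ℝ≥0∞) (g : α → ℝ≥0∞) (cs : List (DAT α)) : Prop :=
  ∃ i, ∃ h : i + 1 < cs.length, ∃ a a',
    IsBasDesc (cs.get ⟨i, Nat.lt_of_succ_lt h⟩) a ∧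
    IsBasDesc (cs.get ⟨i + 1, h⟩) a' ∧
    g a' - d a' < g a ∧ g a < ⊤

open Classical in
/-- Extension of a BAS-level assignment `g` through the gates, exactly. -/
noncomputable def fext (d : α → ℝ≥0∞) (g : α → ℝ≥0∞) : DAT α → ℝ≥0∞
  | .bas a => g a
  | .or cs => (cs.attach.map (fun c => fext d g c.1)).foldr min ⊤
  | .and cs => (cs.attach.map (fun c => fext d g c.1)).foldr max 0
  | .sand cs =>
      if (⊤ ∈ cs.attach.map (fun c => fext d g c.1)) ∨ BadPairs d g cs then ⊤
      else ((cs.attach.map (fun c => fext d g c.1)).getLast?).getD 0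
  decreasing_by all_goals (simp_wf; have := List.sizeOf_lt_of_mem c.2; omega)

lemma foldr_min_eq {β : Type} (g : β → ℝ≥0∞) (l : List β) :
    (l.map g).foldr min ⊤ = ⨅ c ∈ l, g c := by
  induction l with
  | nil => simp
  | cons a l ih => simp [List.mem_cons, iInf_or, iInf_inf_eq, ih]

lemma foldr_max_eq {β : Type} (g : β → ℝ≥0∞) (l : List β) :
    (l.map g).foldr max 0 = ⨆ c ∈ l, g c := by
  induction l with
  | nil => simp
  | cons a l ih => simp [List.mem_cons, iSup_or, iSup_sup_eq, ih]

lemma fext_bas (d g : α → ℝ≥0∞) (a : α) : fext d g (.bas a) = g a := by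
  rw [fext]

lemma fext_or (d g : α → ℝ≥0∞) (cs : List (DAT α)) :
    fext d g (.or cs) = ⨅ c ∈ cs, fext d g c := by
  rw [fext, List.attach_map_val (l := cs) (f := fext d g), foldr_min_eq]

lemma fext_and (d g : α → ℝ≥0∞) (cs : List (DAT α)) :
    fext d g (.and cs) = ⨆ c ∈ cs, fext d g c := by
  rw [fext, List.attach_map_val (l := cs) (f := fext d g), foldr_max_eq]

open Classical in
lemma fext_sand (d g : α → ℝ≥0∞) (cs : List (DAT α)) :
    fext d g (.sand cs) =
      if (⊤ ∈ cs.map (fext d g)) ∨ BadPairs d g cs then ⊤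
      else ((cs.map (fext d g)).getLast?).getD 0 := by
  rw [fext, List.attach_map_val (l := cs) (f := fext d g)]

lemma sandbad_iff (d g : α → ℝ≥0∞) (cs : List (DAT α)) :
    SandBad d (fext d g) cs ↔ ((⊤ ∈ cs.map (fext d g)) ∨ BadPairs d g cs) := by
  unfold SandBad BadPairs
  simp only [List.mem_map, fext_bas]

lemma not_sandbad (O : Attack α) (d : α → ℝ≥0∞) (hd : ∀ a, d a ≠ ⊤)
    {cs : List (DAT α)}
    (hord : ∀ i, (h : i + 1 < cs.length) → ∀ a a', a ∈ (↑O.carrier : Set α) →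
      a' ∈ (↑O.carrier : Set α) →
      IsBasDesc (cs.get ⟨i, Nat.lt_of_succ_lt h⟩) a →
      IsBasDesc (cs.get ⟨i + 1, h⟩) a' → O.lt a a')
    (hfin : ∀ c ∈ cs, fext d (fb O d) c ≠ ⊤) :
    ¬ ((⊤ ∈ cs.map (fext d (fb O d))) ∨ BadPairs d (fb O d) cs) := by
  rintro (h | ⟨i, h, a, a', hda, hda', hlt1, hlt2⟩)
  · obtain ⟨c, hc, hct⟩ := List.mem_map.1 h
    exact hfin c hc hct
  · by_cases ha : a ∈ O.carrier
    · by_cases ha' : a' ∈ O.carrier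
      · have hr : O.lt a a' := hord i h a a' ha ha' hda hda'
        have h1 : d a' + fb O d a ≤ fb O d a' := by
          rw [fb_of_mem O d ha']
          exact add_le_add le_rfl
            (le_iSup₂ (f := fun x (_ : x ∈ {x | O.lt x a'}) => fb O d x) a hr)
        have h2 : fb O d a ≤ fb O d a' - d a' :=
          ENNReal.le_sub_of_add_le_left (hd a') h1
        exact absurd hlt1 (not_lt.2 h2)
      · have : fb O d a' = ⊤ := fb_of_not_mem O d ha'
        rw [this, ENNReal.top_sub (hd a')] at hlt1
        exact not_top_lt hlt1
    · have : fb O d a = ⊤ := fb_of_not_mem O d ha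
      rw [this] at hlt2
      exact lt_irrefl _ hlt2

lemma reaches_le_dur (O : Attack α) (d : α → ℝ≥0∞) (hd : ∀ a, d a ≠ ⊤)
    {v : DAT α} (hr : Reaches (↑O.carrier) O.lt v) :
    fext d (fb O d) v ≤ dur (↑O.carrier) O.lt d := by
  induction hr with
  | bas ha => rw [fext_bas]; exact fb_le_dur O d ha
  | or hc _ ih =>
    rw [fext_or]
    exact (iInf₂_le _ hc).trans ih
  | and _ ih =>
    rw [fext_and]
    exact iSup₂_le ih
  | sand h hord ih =>
    rename_i cs
    have hfin : ∀ c ∈ cs, fext d (fb O d) c ≠ ⊤ :=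
      fun c hc => ((ih c hc).trans_lt (dur_lt_top O d hd)).ne
    rw [fext_sand, if_neg (not_sandbad O d hd hord hfin)]
    cases hcl : (cs.map (fext d (fb O d))).getLast? with
    | none => simp
    | some x =>
      rw [List.getLast?_map] at hcl
      cases hcl2 : cs.getLast? with
      | none => rw [hcl2] at hcl; simp at hcl
      | some c =>
        rw [hcl2] at hcl
        simp only [Option.map_some] at hcl
        obtain rfl : x = fext d (fb O d) c := (Option.some.injEq _ _ ▸ hcl : _).symm
        simp only [Option.getD_some]
        exact ih c (List.mem_of_mem_getLast? (hcl2 ▸ rfl))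

end Stmt13Aux

/-- every successful attack induces an exact time assignment
whose root value is at most the attack's duration, finite on all reached
nodes. -/
theorem stmt13 {α : Type} (T : DAT α) (d : α → ℝ≥0∞) (hd : ∀ a, d a ≠ ⊤)
    (O : Attack α) (hO : DAT.Successful O T) :
    ∃ f : DAT α → ℝ≥0∞, DAT.IsExactTA d f T ∧
      (∀ a, a ∉ O.carrier → f (.bas a) = ⊤) ∧
      (∀ a ∈ O.carrier, f (.bas a) = d a + ⨆ a' ∈ {x | O.lt x a}, f (.bas a')) ∧
      (∀ v, DAT.Subnode v T → DAT.Reaches (↑O.carrier) O.lt v → f v < ⊤) ∧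
      f T ≤ DAT.dur (↑O.carrier) O.lt d := by
  classical
  open Stmt13Aux in
  refine ⟨fext d (fb O d), ?_, ?_, ?_, ?_, ?_⟩
  · intro v _
    cases v with
    | bas a =>
      show d a ≤ fext d (fb O d) (.bas a)
      rw [fext_bas]
      by_cases h : a ∈ O.carrier
      · rw [fb_of_mem O d h]; exact le_self_add
      · rw [fb_of_not_mem O d h]; exact le_top
    | or cs => exact fext_or d (fb O d) cs
    | and cs => exact fext_and d (fb O d) cs
    | sand cs =>
      constructor
      · intro hb
        rw [fext_sand, if_pos ((sandbad_iff d (fb O d) cs).1 hb)]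
      · intro hnb c hc
        rw [fext_sand, if_neg (fun hx => hnb ((sandbad_iff d (fb O d) cs).2 hx))]
        rw [List.getLast?_map, hc]
        rfl
  · intro a ha
    rw [fext_bas]
    exact fb_of_not_mem O d ha
  · intro a ha
    simp only [fext_bas]
    exact fb_of_mem O d ha
  · intro v _ hr
    exact (reaches_le_dur O d hd hr).trans_lt (dur_lt_top O d hd)
  · exact reaches_le_dur O d hd hO
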